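/- Let a₁,…,a_n be distinct reals, ε₁,…,ε_n ∈ {-1,1}, Δᵢ(a) = εᵢ(a-aᵢ), let I ⊆ ℝ be an open interval on which Δᵢ > 0 for all i, let x(a) = ∑_{i=1}^n ξᵢ Δᵢ(a)^{-1/2} with ξᵢ ∈ ℝ, b̃_k(a) = (-1)^k ∑_{i=1}^n (ξᵢ / Δᵢ(a)^{1/2}) σ^i_{k-1}, and c̃_k(a) = ((-1)^{k+1}/2) [ ∑_{i=1}^n (ξᵢ²/Δᵢ(a)) σ^i_{k-1} + ∑_{i≠j} (ξᵢ ξ_j / (Δᵢ(a) Δ_j(a))^{1/2}) ( σ^{ij}_{k-1} + a σ^{ij}_{k-2} ) ]. Then for every 1 ≤ k ≤ n one has c̃_k′(a) = − b̃_k(a) x′(a) on I. -/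

import Mathlib

open Polynomial

/-- For a polynomial `Q` of degree `d` written as `Q(X) = ∑_{k=0}^{d} (-1)^k σ_k X^{d-k}`,
`sig d Q k` is the coefficient `σ_k`, extended by `0` outside `0 ≤ k ≤ d`. -/
noncomputable def sig (d : ℕ) (Q : Polynomial ℝ) (k : ℤ) : ℝ :=
  if 0 ≤ k ∧ k ≤ (d : ℤ) then (-1 : ℝ) ^ k * Q.coeff (d - k.toNat) else 0

/-- `σ^i_k` defined by `P(X)/(X-aᵢ) = ∑_{k=0}^{n-1} (-1)^k σ^i_k X^{n-1-k}`,
with `σ^i_{-1} = σ^i_n = 0`. -/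
noncomputable def sigmaI (n : ℕ) (a : Fin n → ℝ) (i : Fin n) (k : ℤ) : ℝ :=
  sig (n - 1) (∏ j ∈ Finset.univ.erase i, (X - C (a j))) k

/-- `σ^{ij}_k` (for `i ≠ j`) defined by
`P(X)/((X-aᵢ)(X-a_j)) = ∑_{k=0}^{n-2} (-1)^k σ^{ij}_k X^{n-2-k}`,
with `σ^{ij}_{-2} = σ^{ij}_{-1} = σ^{ij}_{n-1} = σ^{ij}_n = 0`. -/
noncomputable def sigmaIJ (n : ℕ) (a : Fin n → ℝ) (i j : Fin n) (k : ℤ) : ℝ :=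
  sig (n - 2) (∏ l ∈ (Finset.univ.erase i).erase j, (X - C (a l))) k

/-- The function `x(a) = ∑ᵢ ξᵢ Δᵢ(a)^{-1/2}`. -/
noncomputable def xfun (n : ℕ) (a ε ξ : Fin n → ℝ) (t : ℝ) : ℝ :=
  ∑ i, ξ i * (ε i * (t - a i)) ^ (-(1/2) : ℝ)

/-- The coefficient `b̃_k(a) = (-1)^k ∑ᵢ (ξᵢ / Δᵢ(a)^{1/2}) σ^i_{k-1}`. -/
noncomputable def btil (n : ℕ) (a ε ξ : Fin n → ℝ) (k : ℕ) (t : ℝ) : ℝ :=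
  (-1 : ℝ) ^ k * ∑ i, ξ i / (ε i * (t - a i)) ^ ((1/2) : ℝ) * sigmaI n a i ((k : ℤ) - 1)

/-- The coefficient `c̃_k(a) = ((-1)^{k+1}/2) [ ∑ᵢ (ξᵢ²/Δᵢ(a)) σ^i_{k-1}
+ ∑_{i≠j} (ξᵢξ_j/(Δᵢ(a)Δ_j(a))^{1/2}) ( σ^{ij}_{k-1} + a σ^{ij}_{k-2} ) ]`. -/
noncomputable def ctil (n : ℕ) (a ε ξ : Fin n → ℝ) (k : ℕ) (t : ℝ) : ℝ :=
  ((-1 : ℝ) ^ (k + 1) / 2) *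
    ((∑ i, ξ i ^ 2 / (ε i * (t - a i)) * sigmaI n a i ((k : ℤ) - 1)) +
      ∑ i, ∑ j ∈ Finset.univ.erase i,
        ξ i * ξ j / ((ε i * (t - a i)) * (ε j * (t - a j))) ^ ((1/2) : ℝ) *
          (sigmaIJ n a i j ((k : ℤ) - 1) + t * sigmaIJ n a i j ((k : ℤ) - 2)))

lemma neg_one_zpow_sub_one (k : ℤ) : (-1:ℝ)^(k-1) = -(-1:ℝ)^k := by
  rw [zpow_sub₀ (by norm_num : (-1:ℝ) ≠ 0), zpow_one, div_neg, div_one]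

lemma sig_rel (d : ℕ) (c : ℝ) (Q : Polynomial ℝ) (hQ : Q.natDegree ≤ d) (k : ℤ) :
    sig (d+1) ((X - C c) * Q) k = sig d Q k + c * sig d Q (k-1) := by
  unfold sig
  have hco : ∀ m : ℕ, ((X - C c) * Q).coeff m = (if m = 0 then 0 else Q.coeff (m-1)) - c * Q.coeff m := by
    intro m
    rw [sub_mul, coeff_sub, coeff_C_mul]
    congr 1
    cases m with
    | zero => simp
    | succ m => simp [coeff_X_mul]
  rcases lt_or_ge k 0 with hk | hk
  · rw [if_neg (show ¬(0 ≤ k ∧ k ≤ ((d+1:ℕ):ℤ)) by omega),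
      if_neg (show ¬(0 ≤ k ∧ k ≤ ((d:ℕ):ℤ)) by omega),
      if_neg (show ¬(0 ≤ k-1 ∧ k-1 ≤ ((d:ℕ):ℤ)) by omega)]
    ring
  rcases le_or_gt k d with hkd | hkd
  · rw [if_pos (show 0 ≤ k ∧ k ≤ ((d+1:ℕ):ℤ) by push_cast; omega),
      if_pos (show 0 ≤ k ∧ k ≤ ((d:ℕ):ℤ) by omega)]
    rcases eq_or_lt_of_le hk with h0 | h0
    · -- k = 0
      rw [if_neg (show ¬(0 ≤ k-1 ∧ k-1 ≤ ((d:ℕ):ℤ)) by omega)]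
      have : k = 0 := h0.symm
      subst this
      simp only [Int.toNat_zero, Nat.sub_zero, hco]
      rw [if_neg (show ¬(d+1 = 0) by omega),
        Polynomial.coeff_eq_zero_of_natDegree_lt (lt_of_le_of_lt hQ (Nat.lt_succ_self d))]
      norm_num
    · rw [if_pos (show 0 ≤ k-1 ∧ k-1 ≤ ((d:ℕ):ℤ) by omega)]
      have hkn : k.toNat ≤ d := by omega
      have hk1 : (k-1).toNat = k.toNat - 1 := by omega
      have h1 : d + 1 - k.toNat ≠ 0 := by omega
      rw [hco, if_neg h1, hk1]
      have e1 : d + 1 - k.toNat - 1 = d - k.toNat := by omega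
      have e2 : d - (k.toNat - 1) = d + 1 - k.toNat := by omega
      rw [e1, e2, neg_one_zpow_sub_one]
      ring
  · -- k > d
    rw [if_neg (show ¬(0 ≤ k ∧ k ≤ ((d:ℕ):ℤ)) by omega)]
    rcases eq_or_lt_of_le (show (d:ℤ)+1 ≤ k by omega) with hke | hke
    · rw [if_pos (show 0 ≤ k ∧ k ≤ ((d+1:ℕ):ℤ) by push_cast; omega),
        if_pos (show 0 ≤ k-1 ∧ k-1 ≤ ((d:ℕ):ℤ) by omega)]
      have e1 : k.toNat = d + 1 := by omega
      have e2 : (k-1).toNat = d := by omega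
      rw [e1, e2]; simp only [Nat.sub_self]
      rw [hco, if_pos rfl, neg_one_zpow_sub_one]
      ring
    · rw [if_neg (show ¬(0 ≤ k ∧ k ≤ ((d+1:ℕ):ℤ)) by push_cast; omega),
        if_neg (show ¬(0 ≤ k-1 ∧ k-1 ≤ ((d:ℕ):ℤ)) by omega)]
      ring

lemma sigmaIJ_symm (n : ℕ) (a : Fin n → ℝ) (i j : Fin n) (k : ℤ) :
    sigmaIJ n a i j k = sigmaIJ n a j i k := by
  unfold sigmaIJ
  rw [Finset.erase_right_comm]

lemma sigmaI_rel (n : ℕ) (a : Fin n → ℝ) (i j : Fin n) (hij : i ≠ j) (k : ℤ) :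
    sigmaI n a i k = sigmaIJ n a i j k + a j * sigmaIJ n a i j (k-1) := by
  have h2 : 2 ≤ n := by
    rcases Nat.lt_or_ge n 2 with h | h
    · interval_cases n
      · exact i.elim0
      · exact absurd (Subsingleton.elim i j) hij
    · exact h
  unfold sigmaI sigmaIJ
  have hmem : j ∈ Finset.univ.erase i := Finset.mem_erase.2 ⟨hij.symm, Finset.mem_univ j⟩
  rw [← Finset.mul_prod_erase _ _ hmem]
  have hd : n - 1 = (n-2) + 1 := by omega
  rw [hd]
  apply sig_rel
  have : ∀ l ∈ (Finset.univ.erase i).erase j, X - C (a l) ≠ (0 : Polynomial ℝ) :=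
    fun l _ => X_sub_C_ne_zero (a l)
  calc (∏ l ∈ (Finset.univ.erase i).erase j, (X - C (a l))).natDegree
      = ∑ l ∈ (Finset.univ.erase i).erase j, (X - C (a l)).natDegree :=
        Polynomial.natDegree_prod _ _ this
    _ = ((Finset.univ.erase i).erase j).card := by
        simp [Polynomial.natDegree_X_sub_C]
    _ ≤ n - 2 := by
        rw [Finset.card_erase_of_mem hmem, Finset.card_erase_of_mem (Finset.mem_univ i)]
        simp only [Finset.card_univ, Fintype.card_fin]; omega

lemma swap_sum {n : ℕ} (f : Fin n → Fin n → ℝ) :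
    ∑ i, ∑ j ∈ Finset.univ.erase i, f i j = ∑ i, ∑ j ∈ Finset.univ.erase i, f j i :=
  Finset.sum_comm' (by intro x y; simp [Finset.mem_erase, eq_comm, ne_comm])

lemma diag_term (t ai εi ξi σi : ℝ) (hDi : 0 < εi * (t - ai)) :
    (0 * (εi * (t - ai)) - ξi ^ 2 * εi) / (εi * (t - ai)) ^ 2 * σi =
    2 * ((ξi / (εi * (t - ai)) ^ ((1/2):ℝ) * σi) *
      (ξi * (εi * -(1/2) * (εi * (t - ai)) ^ ((-(1/2):ℝ) - 1)))) := by
  set si := (εi * (t - ai)) ^ ((1/2):ℝ) with hsidef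
  have hsipos : 0 < si := Real.rpow_pos_of_pos hDi _
  have hsi2 : si * si = εi * (t - ai) := by
    rw [hsidef, ← Real.rpow_add hDi]; norm_num
  have e4 : (εi * (t - ai)) ^ ((-(1/2):ℝ) - 1) = (si * (si * si))⁻¹ := by
    rw [hsidef, ← Real.rpow_add hDi, ← Real.rpow_add hDi, ← Real.rpow_neg hDi.le]
    norm_num
  rw [e4, ← hsi2]
  field_simp
  ring

lemma pair_term (t ai aj εi εj ξi ξj σ1 σ2 σi' σj' : ℝ)
    (hεi : εi = 1 ∨ εi = -1) (hεj : εj = 1 ∨ εj = -1)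
    (hDi : 0 < εi * (t - ai)) (hDj : 0 < εj * (t - aj))
    (hσi : σi' = σ1 + aj * σ2) (hσj : σj' = σ1 + ai * σ2) :
    (0 * ((εi * (t - ai)) * (εj * (t - aj))) ^ ((1/2):ℝ) -
      ξi * ξj * ((εi * (εj * (t - aj)) + (εi * (t - ai)) * εj) * (1/2) *
        ((εi * (t - ai)) * (εj * (t - aj))) ^ ((1/2:ℝ) - 1))) /
      (((εi * (t - ai)) * (εj * (t - aj))) ^ ((1/2):ℝ)) ^ 2 * (σ1 + t * σ2) +
    ξi * ξj / ((εi * (t - ai)) * (εj * (t - aj))) ^ ((1/2):ℝ) * (0 + 1 * σ2)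
    = (ξi / (εi * (t - ai)) ^ ((1/2):ℝ) * σi') *
        (ξj * (εj * -(1/2) * (εj * (t - aj)) ^ ((-(1/2):ℝ) - 1))) +
      (ξj / (εj * (t - aj)) ^ ((1/2):ℝ) * σj') *
        (ξi * (εi * -(1/2) * (εi * (t - ai)) ^ ((-(1/2):ℝ) - 1))) := by
  have hg : 0 < (εi * (t - ai)) * (εj * (t - aj)) := mul_pos hDi hDj
  set si := (εi * (t - ai)) ^ ((1/2):ℝ) with hsidef
  set sj := (εj * (t - aj)) ^ ((1/2):ℝ) with hsjdef
  have hsipos : 0 < si := Real.rpow_pos_of_pos hDi _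
  have hsjpos : 0 < sj := Real.rpow_pos_of_pos hDj _
  have hsi2 : si * si = εi * (t - ai) := by rw [hsidef, ← Real.rpow_add hDi]; norm_num
  have hsj2 : sj * sj = εj * (t - aj) := by rw [hsjdef, ← Real.rpow_add hDj]; norm_num
  have e1 : ((εi * (t - ai)) * (εj * (t - aj))) ^ ((1/2):ℝ) = si * sj :=
    Real.mul_rpow hDi.le hDj.le
  have e2 : ((εi * (t - ai)) * (εj * (t - aj))) ^ ((1/2:ℝ) - 1) =
      (si * sj) / ((εi * (t - ai)) * (εj * (t - aj))) := by
    rw [Real.rpow_sub hg, Real.rpow_one, e1]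
  have e4i : (εi * (t - ai)) ^ ((-(1/2):ℝ) - 1) = (si * (si * si))⁻¹ := by
    rw [hsidef, ← Real.rpow_add hDi, ← Real.rpow_add hDi, ← Real.rpow_neg hDi.le]
    norm_num
  have e4j : (εj * (t - aj)) ^ ((-(1/2):ℝ) - 1) = (sj * (sj * sj))⁻¹ := by
    rw [hsjdef, ← Real.rpow_add hDj, ← Real.rpow_add hDj, ← Real.rpow_neg hDj.le]
    norm_num
  rw [e1, e2, e4i, e4j, hσi, hσj, ← hsi2, ← hsj2]
  clear_value si sj
  clear hsidef hsjdef
  have hai : ai = t - εi * (si * si) := by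
    rcases hεi with h | h <;> rw [h] at hsi2 ⊢ <;> linarith
  have haj : aj = t - εj * (sj * sj) := by
    rcases hεj with h | h <;> rw [h] at hsj2 ⊢ <;> linarith
  subst hai haj
  rcases hεi with h | h <;> rcases hεj with h' | h' <;> subst h h' <;>
    · field_simp
      ring

/-- For every `1 ≤ k ≤ n`, `c̃_k′(a) = − b̃_k(a) x′(a)` on `I`. -/
theorem stmt9 (n : ℕ) (a : Fin n → ℝ) (ha : Function.Injective a)
    (ε : Fin n → ℝ) (hε : ∀ i, ε i = 1 ∨ ε i = -1)
    (I : Set ℝ) (hIopen : IsOpen I) (hIconn : I.OrdConnected)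
    (hΔ : ∀ i, ∀ t ∈ I, 0 < ε i * (t - a i))
    (ξ : Fin n → ℝ) :
    ∀ k : ℕ, 1 ≤ k → k ≤ n → ∀ t ∈ I,
      deriv (ctil n a ε ξ k) t = - btil n a ε ξ k t * deriv (xfun n a ε ξ) t := by
  intro k hk1 hkn t ht
  have hD : ∀ i : Fin n, 0 < ε i * (t - a i) := fun i => hΔ i t ht
  have hbase : ∀ i : Fin n, HasDerivAt (fun u => ε i * (u - a i)) (ε i) t := by
    intro i
    simpa using ((hasDerivAt_id t).sub_const (a i)).const_mul (ε i)
  have hx : HasDerivAt (xfun n a ε ξ)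
      (∑ i, ξ i * (ε i * -(1/2) * (ε i * (t - a i)) ^ ((-(1/2):ℝ) - 1))) t := by
    unfold xfun
    apply HasDerivAt.fun_sum
    intro i _
    exact ((hbase i).rpow_const (Or.inl (ne_of_gt (hD i)))).const_mul (ξ i)
  have hc : HasDerivAt (ctil n a ε ξ k)
      (((-1 : ℝ) ^ (k + 1) / 2) *
        ((∑ i, (0 * (ε i * (t - a i)) - ξ i ^ 2 * ε i) / (ε i * (t - a i)) ^ 2 *
            sigmaI n a i ((k : ℤ) - 1)) +
          ∑ i, ∑ j ∈ Finset.univ.erase i,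
            ((0 * ((ε i * (t - a i)) * (ε j * (t - a j))) ^ ((1/2):ℝ) -
              ξ i * ξ j * ((ε i * (ε j * (t - a j)) + (ε i * (t - a i)) * ε j) * (1/2) *
                ((ε i * (t - a i)) * (ε j * (t - a j))) ^ ((1/2:ℝ) - 1))) /
              (((ε i * (t - a i)) * (ε j * (t - a j))) ^ ((1/2):ℝ)) ^ 2 *
              (sigmaIJ n a i j ((k : ℤ) - 1) + t * sigmaIJ n a i j ((k : ℤ) - 2)) +
            ξ i * ξ j / ((ε i * (t - a i)) * (ε j * (t - a j))) ^ ((1/2):ℝ) *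
              (0 + 1 * sigmaIJ n a i j ((k : ℤ) - 2))))) t := by
    unfold ctil
    apply HasDerivAt.const_mul
    apply HasDerivAt.add
    · apply HasDerivAt.fun_sum
      intro i _
      exact ((hasDerivAt_const t (ξ i ^ 2)).div (hbase i) (ne_of_gt (hD i))).mul_const _
    · apply HasDerivAt.fun_sum
      intro i _
      apply HasDerivAt.fun_sum
      intro j _
      have hg : HasDerivAt (fun u => (ε i * (u - a i)) * (ε j * (u - a j)))
          (ε i * (ε j * (t - a j)) + (ε i * (t - a i)) * ε j) t := (hbase i).mul (hbase j)
      have hgpos : 0 < (ε i * (t - a i)) * (ε j * (t - a j)) := mul_pos (hD i) (hD j)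
      have hh := hg.rpow_const (p := ((1/2):ℝ)) (Or.inl (ne_of_gt hgpos))
      have hq := (hasDerivAt_const t (ξ i * ξ j)).div hh
        (ne_of_gt (Real.rpow_pos_of_pos hgpos _))
      have hr : HasDerivAt (fun u => sigmaIJ n a i j ((k : ℤ) - 1) +
          u * sigmaIJ n a i j ((k : ℤ) - 2)) (0 + 1 * sigmaIJ n a i j ((k : ℤ) - 2)) t :=
        (hasDerivAt_const t _).add ((hasDerivAt_id t).mul_const _)
      exact hq.mul hr
  rw [hc.deriv, hx.deriv]
  unfold btil
  -- abbreviations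
  set B : Fin n → ℝ :=
    fun i => ξ i / (ε i * (t - a i)) ^ ((1/2):ℝ) * sigmaI n a i ((k : ℤ) - 1) with hB
  set Cc : Fin n → ℝ :=
    fun i => ξ i * (ε i * -(1/2) * (ε i * (t - a i)) ^ ((-(1/2):ℝ) - 1)) with hC
  have hrhs : -((-1:ℝ)^k * ∑ i, B i) * (∑ i, Cc i) =
      ((-1:ℝ)^(k+1)/2) * (2 * ∑ i, ∑ j, B i * Cc j) := by
    rw [← Finset.sum_mul_sum]
    rw [pow_succ]; ring
  rw [hrhs]
  congr 1
  have hdiag : ∑ i, ∑ j, B i * Cc j =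
      ∑ i, (B i * Cc i + ∑ j ∈ Finset.univ.erase i, B i * Cc j) :=
    Finset.sum_congr rfl fun i _ =>
      (Finset.add_sum_erase _ _ (Finset.mem_univ i)).symm
  rw [hdiag, Finset.sum_add_distrib, mul_add]
  congr 1
  · rw [Finset.mul_sum]
    exact Finset.sum_congr rfl fun i _ => diag_term t (a i) (ε i) (ξ i) _ (hD i)
  · calc
      (∑ i, ∑ j ∈ Finset.univ.erase i,
        ((0 * ((ε i * (t - a i)) * (ε j * (t - a j))) ^ ((1/2):ℝ) -
          ξ i * ξ j * ((ε i * (ε j * (t - a j)) + (ε i * (t - a i)) * ε j) * (1/2) *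
            ((ε i * (t - a i)) * (ε j * (t - a j))) ^ ((1/2:ℝ) - 1))) /
          (((ε i * (t - a i)) * (ε j * (t - a j))) ^ ((1/2):ℝ)) ^ 2 *
          (sigmaIJ n a i j ((k : ℤ) - 1) + t * sigmaIJ n a i j ((k : ℤ) - 2)) +
        ξ i * ξ j / ((ε i * (t - a i)) * (ε j * (t - a j))) ^ ((1/2):ℝ) *
          (0 + 1 * sigmaIJ n a i j ((k : ℤ) - 2))))
        = ∑ i, ∑ j ∈ Finset.univ.erase i, (B i * Cc j + B j * Cc i) := by
          refine Finset.sum_congr rfl fun i _ => Finset.sum_congr rfl fun j hj => ?_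
          have hij : i ≠ j := fun h => (Finset.mem_erase.1 hj).1 h.symm
          have hσi : sigmaI n a i ((k:ℤ)-1) =
              sigmaIJ n a i j ((k:ℤ)-1) + a j * sigmaIJ n a i j ((k:ℤ)-2) := by
            have h := sigmaI_rel n a i j hij ((k:ℤ)-1)
            have e : (k:ℤ)-1-1 = (k:ℤ)-2 := by ring
            rwa [e] at h
          have hσj : sigmaI n a j ((k:ℤ)-1) =
              sigmaIJ n a i j ((k:ℤ)-1) + a i * sigmaIJ n a i j ((k:ℤ)-2) := by
            have h := sigmaI_rel n a j i hij.symm ((k:ℤ)-1)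
            have e : (k:ℤ)-1-1 = (k:ℤ)-2 := by ring
            rw [e, sigmaIJ_symm n a j i ((k:ℤ)-1), sigmaIJ_symm n a j i ((k:ℤ)-2)] at h
            exact h
          exact pair_term t (a i) (a j) (ε i) (ε j) (ξ i) (ξ j)
            (sigmaIJ n a i j ((k:ℤ)-1)) (sigmaIJ n a i j ((k:ℤ)-2))
            (sigmaI n a i ((k:ℤ)-1)) (sigmaI n a j ((k:ℤ)-1))
            (hε i) (hε j) (hD i) (hD j) hσi hσj
      _ = (∑ i, ∑ j ∈ Finset.univ.erase i, B i * Cc j) +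
          ∑ i, ∑ j ∈ Finset.univ.erase i, B j * Cc i := by
          simp only [Finset.sum_add_distrib]
      _ = 2 * ∑ i, ∑ j ∈ Finset.univ.erase i, B i * Cc j := by
          rw [← swap_sum (fun i j => B i * Cc j)]
          ring
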